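/- The quantity C = m₁² + (m₂ − B e₂ sin q)² + (m₃ + B(e₁ + e₂ cos q))² is a Casimir of the Poisson bracket on ℝ⁵ with coordinates (m₁, m₂, m₃, q, p) defined by {m₁,m₂} = −m₃ − B(e₁ + e₂ cos q), {m₂,m₃} = −m₁, {m₁,m₃} = m₂ − B e₂ sin q, {m₂,p} = B e₂ cos q, {m₃,p} = B e₂ sin q, {q,p} = 1, with all other brackets of coordinates zero. That is, the bracket of C with each of the coordinate functions m₁, m₂, m₃, q, p vanishes. -/

import Mathlib

open Real

/-- The square of the momentum map is a Casimir of the reduced Poisson structure: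
the bracket of `C` with each coordinate function vanishes, where the bracket of two
functions is `∑ i j, ∂F/∂xᵢ ⬝ Pᵢⱼ ⬝ ∂G/∂xⱼ` with `P` the structure matrix. -/
theorem stmt_2 (B e₁ e₂ m₁ m₂ m₃ q p : ℝ) (hq : q ∈ Set.Ioo 0 π) :
    let C : ℝ → ℝ → ℝ → ℝ → ℝ → ℝ := fun a b c d e =>
      a ^ 2 + (b - B * e₂ * Real.sin d) ^ 2 + (c + B * (e₁ + e₂ * Real.cos d)) ^ 2
    let dC : Fin 5 → ℝ :=
      ![deriv (fun x => C x m₂ m₃ q p) m₁,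
        deriv (fun x => C m₁ x m₃ q p) m₂,
        deriv (fun x => C m₁ m₂ x q p) m₃,
        deriv (fun x => C m₁ m₂ m₃ x p) q,
        deriv (fun x => C m₁ m₂ m₃ q x) p]
    let P : Matrix (Fin 5) (Fin 5) ℝ :=
      !![0, -m₃ - B * (e₁ + e₂ * Real.cos q), m₂ - B * e₂ * Real.sin q, 0, 0;
         m₃ + B * (e₁ + e₂ * Real.cos q), 0, -m₁, 0, B * e₂ * Real.cos q;
         -(m₂ - B * e₂ * Real.sin q), m₁, 0, 0, B * e₂ * Real.sin q;
         0, 0, 0, 0, 1;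
         0, -(B * e₂ * Real.cos q), -(B * e₂ * Real.sin q), -1, 0]
    ∀ k : Fin 5, ∑ i : Fin 5, dC i * P i k = 0 := by
  intro C dC P k
  have h1 : dC 0 = 2 * m₁ := by
    show deriv _ _ = _
    have : HasDerivAt (fun x : ℝ => C x m₂ m₃ q p) (2 * m₁) m₁ := by
      simpa [C, add_assoc] using ((hasDerivAt_id m₁).pow 2).add_const
        ((m₂ - B * e₂ * Real.sin q) ^ 2 + (m₃ + B * (e₁ + e₂ * Real.cos q)) ^ 2)
    simpa [C] using this.deriv
  have h2 : dC 1 = 2 * (m₂ - B * e₂ * Real.sin q) := by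
    show deriv _ _ = _
    have : HasDerivAt (fun x : ℝ => C m₁ x m₃ q p)
        (2 * (m₂ - B * e₂ * Real.sin q)) m₂ := by
      have := (((hasDerivAt_id m₂).sub_const (B * e₂ * Real.sin q)).pow 2)
      simpa [C, add_comm, add_assoc, add_left_comm, mul_comm] using
        ((this.const_add (m₁ ^ 2)).add_const ((m₃ + B * (e₁ + e₂ * Real.cos q)) ^ 2))
    simpa [C] using this.deriv
  have h3 : dC 2 = 2 * (m₃ + B * (e₁ + e₂ * Real.cos q)) := by
    show deriv _ _ = _
    have : HasDerivAt (fun x : ℝ => C m₁ m₂ x q p)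
        (2 * (m₃ + B * (e₁ + e₂ * Real.cos q))) m₃ := by
      have := (((hasDerivAt_id m₃).add_const (B * (e₁ + e₂ * Real.cos q))).pow 2)
      simpa [C, mul_comm] using
        this.const_add (m₁ ^ 2 + (m₂ - B * e₂ * Real.sin q) ^ 2)
    simpa [C] using this.deriv
  have h4 : dC 3 = 2 * (m₂ - B * e₂ * Real.sin q) * (-(B * e₂ * Real.cos q))
      + 2 * (m₃ + B * (e₁ + e₂ * Real.cos q)) * (-(B * e₂ * Real.sin q)) := by
    show deriv _ _ = _
    have hs : HasDerivAt (fun x : ℝ => (m₂ - B * e₂ * Real.sin x) ^ 2)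
        (2 * (m₂ - B * e₂ * Real.sin q) * (-(B * e₂ * Real.cos q))) q := by
      have := (((Real.hasDerivAt_sin q).const_mul (B * e₂)).const_sub m₂).fun_pow 2
      refine this.congr_deriv ?_
      ring
    have hc : HasDerivAt (fun x : ℝ => (m₃ + B * (e₁ + e₂ * Real.cos x)) ^ 2)
        (2 * (m₃ + B * (e₁ + e₂ * Real.cos q)) * (-(B * e₂ * Real.sin q))) q := by
      have := ((((Real.hasDerivAt_cos q).const_mul e₂).const_add e₁).const_mul
        B).const_add m₃ |>.fun_pow 2
      refine this.congr_deriv ?_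
      ring
    have : HasDerivAt (fun x : ℝ => C m₁ m₂ m₃ x p)
        (2 * (m₂ - B * e₂ * Real.sin q) * (-(B * e₂ * Real.cos q))
          + 2 * (m₃ + B * (e₁ + e₂ * Real.cos q)) * (-(B * e₂ * Real.sin q))) q := by
      simpa [C, add_assoc] using (hs.add hc).const_add (m₁ ^ 2)
    simpa [C] using this.deriv
  have h5 : dC 4 = 0 := by
    show deriv _ _ = _
    simp [C]
  clear_value dC
 
  fin_cases k <;>
    simp [Fin.sum_univ_five, h1, h2, h3, h4, h5, P] <;>
    ring
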